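/- Let D be a nonempty finite set of forbidden patterns and let r₁, r₂ be as defined. If cap(D) = 0, then for every n ≥ 1 one has δ_n(D) ≤ 2^{r₁ + r₂}; that is, the size of any code avoiding D is bounded above by the constant 2^{r₁+r₂} independently of the word length. -/

import Mathlib

/-- The integer value of a binary symbol. -/
def boolToInt (b : Bool) : ℤ := if b then 1 else 0

/-- Componentwise difference of two binary words, a word over `{-1, 0, +1}`. -/
def diffWord (u v : List Bool) : List ℤ :=
  List.zipWith (fun a b => boolToInt a - boolToInt b) u v

/-- A forbidden pattern: a nonempty finite word over the alphabet `{-1, 0, +1}`. -/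
def IsPattern (p : List ℤ) : Prop :=
  p ≠ [] ∧ ∀ x ∈ p, x = -1 ∨ x = 0 ∨ x = 1

/-- A code `C` of binary words avoids the forbidden set `D` if no difference of two
distinct code words contains a pattern of `D` as a contiguous subword (factor). -/
def AvoidsCode (D : Finset (List ℤ)) (C : Finset (List Bool)) : Prop :=
  ∀ u ∈ C, ∀ v ∈ C, u ≠ v → ∀ p ∈ D, ¬ p <:+: diffWord u v

/-- `delta D n` : the maximal cardinality of a code of binary words of length `n`
avoiding the forbidden set `D`. -/
noncomputable def delta (D : Finset (List ℤ)) (n : ℕ) : ℕ :=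
  sSup {k : ℕ | ∃ C : Finset (List Bool),
    (∀ u ∈ C, u.length = n) ∧ AvoidsCode D C ∧ C.card = k}

/-- The capacity of a set of forbidden difference patterns. -/
noncomputable def cap (D : Finset (List ℤ)) : ℝ :=
  Filter.limsup (fun n : ℕ => Real.logb 2 (delta D n) / n) Filter.atTop

namespace ZeroCap

lemma getD_replicate (k i : ℕ) : (List.replicate k (0:ℤ)).getD i 0 = 0 := by
  rw [List.getD_eq_getElem?_getD, List.getElem?_replicate]
  split <;> simp

lemma getD_append (l₁ l₂ : List ℤ) (i : ℕ) :
    (l₁ ++ l₂).getD i 0 = if i < l₁.length then l₁.getD i 0 else l₂.getD (i - l₁.length) 0 := by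
  split
  · next h => rw [List.getD_eq_getElem?_getD, List.getElem?_append_left h,
      ← List.getD_eq_getElem?_getD]
  · next h => rw [List.getD_eq_getElem?_getD, List.getElem?_append_right (le_of_not_gt h),
      ← List.getD_eq_getElem?_getD]

lemma getD_drop (l : List ℤ) (s j : ℕ) : (l.drop s).getD j 0 = l.getD (s+j) 0 := by
  rw [List.getD_eq_getElem?_getD, List.getElem?_drop, ← List.getD_eq_getElem?_getD]

lemma getD_take_lt (l : List ℤ) {j k : ℕ} (h : j < k) :
    (l.take k).getD j 0 = l.getD j 0 := by
  rw [List.getD_eq_getElem?_getD, List.getElem?_take, if_pos h, ← List.getD_eq_getElem?_getD]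

lemma prefix_getD {p l : List ℤ} (h : p <+: l) {j : ℕ} (hj : j < p.length) :
    l.getD j 0 = p.getD j 0 := by
  obtain ⟨t, rfl⟩ := h
  rw [getD_append, if_pos hj]

lemma eq_replicate_of_getD {l : List ℤ} (h : ∀ j < l.length, l.getD j 0 = 0) :
    l = List.replicate l.length 0 := by
  rw [List.eq_replicate_iff]
  refine ⟨rfl, fun b hb => ?_⟩
  obtain ⟨i, hi, rfl⟩ := List.mem_iff_getElem.1 hb
  have h2 := h i hi
  rwa [List.getD_eq_getElem _ _ hi] at h2

lemma take_eq_replicate_of (l : List ℤ) (a : ℕ) (haL : a ≤ l.length)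
    (h : ∀ j < a, l.getD j 0 = 0) : l.take a = List.replicate a 0 := by
  have hl : (l.take a).length = a := by simp [haL]
  have h2 := eq_replicate_of_getD (l := l.take a) (fun j hj => by
    rw [getD_take_lt l (hl ▸ hj)]; exact h j (hl ▸ hj))
  rwa [hl] at h2

lemma drop_eq_replicate_of (l : List ℤ) (s : ℕ)
    (h : ∀ j, s ≤ j → j < l.length → l.getD j 0 = 0) :
    l.drop s = List.replicate (l.length - s) 0 := by
  have hl : (l.drop s).length = l.length - s := by simp
  have h2 := eq_replicate_of_getD (l := l.drop s) (fun j hj => by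
    rw [List.length_drop] at hj
    rw [getD_drop]; exact h (s+j) (by omega) (by omega))
  rwa [hl] at h2

lemma getD_reverse {l : List ℤ} {j : ℕ} (hj : j < l.length) :
    l.reverse.getD j 0 = l.getD (l.length - 1 - j) 0 := by
  have h1 : j < l.reverse.length := by simpa using hj
  have h2 : l.length - 1 - j < l.length := by omega
  rw [List.getD_eq_getElem _ _ h1, List.getD_eq_getElem _ _ h2, List.getElem_reverse]

lemma infix_replicate_all_zero {p : List ℤ} {g : ℕ} (h : p <:+: List.replicate g 0) :
    p = List.replicate p.length 0 := by
  rw [List.eq_replicate_iff]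
  exact ⟨rfl, fun b hb => List.eq_of_mem_replicate (h.subset hb)⟩


lemma diffWord_self (x : List Bool) : diffWord x x = List.replicate x.length (0:ℤ) := by
  induction x with
  | nil => rfl
  | cons a t ih =>
    simp only [diffWord, List.zipWith_cons_cons, List.length_cons, List.replicate_succ] at *
    rw [ih]
    simp

lemma diffWord_append (x x' y y' : List Bool) (h : x.length = x'.length) :
    diffWord (x ++ y) (x' ++ y') = diffWord x x' ++ diffWord y y' :=
  List.zipWith_append h

lemma diffWord_length (u v : List Bool) :
    (diffWord u v).length = min u.length v.length := by
  simp [diffWord]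

/-- the building blocks -/
def wb (u v : List Bool) : Bool → List Bool := fun b => if b then u else v

def Wl (u v : List Bool) (z : ℕ) : List Bool → List Bool
  | [] => []
  | b :: t => (wb u v b ++ List.replicate z false) ++ Wl u v z t

lemma wb_length (u v : List Bool) (hl : u.length = v.length) (b : Bool) :
    (wb u v b).length = u.length := by
  cases b <;> simp [wb, hl]

lemma Wl_length (u v : List Bool) (hl : u.length = v.length) (z : ℕ) :
    ∀ l : List Bool, (Wl u v z l).length = l.length * (u.length + z) := by
  intro l
  induction l with
  | nil => simp [Wl]
  | cons b t ih =>
    simp only [Wl, List.length_append, List.length_replicate, ih, List.length_cons,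
      wb_length u v hl]
    ring

lemma Wl_inj (u v : List Bool) (hne : u ≠ v) (hl : u.length = v.length) (z : ℕ) :
    ∀ l₁ l₂ : List Bool, l₁.length = l₂.length → Wl u v z l₁ = Wl u v z l₂ → l₁ = l₂ := by
  intro l₁
  induction l₁ with
  | nil => intro l₂ h _; cases l₂ <;> simp_all
  | cons b t ih =>
    intro l₂ h heq
    cases l₂ with
    | nil => simp at h
    | cons c t₂ =>
      simp only [Wl] at heq
      have hlen2 : (wb u v b ++ List.replicate z false).length
          = (wb u v c ++ List.replicate z false).length := by
        simp [wb_length u v hl]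
      obtain ⟨h1, h2⟩ := List.append_inj heq hlen2
      have hbc : b = c := by
        have h3 := (List.append_inj h1 (by simp [wb_length u v hl])).1
        cases b <;> cases c <;> simp [wb] at h3 ⊢ <;> exact hne (by simp [h3])
      simp only [List.length_cons] at h
      rw [hbc, ih t₂ (by omega) h2]

lemma diffWord_Wl (u v : List Bool) (hl : u.length = v.length) (z : ℕ) :
    ∀ l₁ l₂ : List Bool, l₁.length = l₂.length →
      diffWord (Wl u v z l₁) (Wl u v z l₂) =
        (List.zipWith (fun b c => diffWord (wb u v b) (wb u v c)
          ++ List.replicate z (0:ℤ)) l₁ l₂).flatten := by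
  intro l₁
  induction l₁ with
  | nil => intro l₂ h; cases l₂ <;> simp_all [Wl, diffWord]
  | cons b t ih =>
    intro l₂ h
    cases l₂ with
    | nil => simp at h
    | cons c t₂ =>
      simp only [Wl, List.zipWith_cons_cons, List.flatten_cons]
      rw [diffWord_append _ _ _ _ (by simp [wb_length u v hl]),
        diffWord_append _ _ _ _ (by simp [wb_length u v hl]),
        diffWord_self, ih t₂ (by simpa using h)]
      simp [List.append_assoc]

lemma mem_zipWith' {α β γ : Type*} (f : α → β → γ) :
    ∀ (l₁ : List α) (l₂ : List β) (c : γ), c ∈ List.zipWith f l₁ l₂ → ∃ a b, c = f a b := by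
  intro l₁
  induction l₁ with
  | nil => intro l₂ c hc; simp at hc
  | cons a t ih =>
    intro l₂ c hc
    cases l₂ with
    | nil => simp at hc
    | cons b t₂ =>
      simp only [List.zipWith_cons_cons, List.mem_cons] at hc
      rcases hc with rfl | hc
      · exact ⟨a, b, rfl⟩
      · exact ih t₂ c hc

lemma code_card_le (n : ℕ) (C : Finset (List Bool)) (hlen : ∀ u ∈ C, u.length = n) :
    C.card ≤ 2 ^ n := by
  have h : C.card ≤ (Finset.univ : Finset (Fin n → Bool)).card := by
    apply Finset.card_le_card_of_injOn (fun w (i : Fin n) => w.getD i false)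
      (fun w _ => Finset.mem_univ _)
    intro w₁ h₁ w₂ h₂ heq
    apply List.ext_getElem (by rw [hlen _ h₁, hlen _ h₂])
    intro i hi1 hi2
    have hi : i < n := by rw [← hlen _ h₁]; exact hi1
    have h5 : w₁.getD i false = w₂.getD i false := congrFun heq ⟨i, hi⟩
    rwa [List.getD_eq_getElem _ _ hi1, List.getD_eq_getElem _ _ hi2] at h5
  simpa using h

lemma deltaSet_bdd (D : Finset (List ℤ)) (n : ℕ) :
    BddAbove {k : ℕ | ∃ C : Finset (List Bool),
      (∀ u ∈ C, u.length = n) ∧ AvoidsCode D C ∧ C.card = k} := by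
  refine ⟨2^n, ?_⟩
  rintro k ⟨C, h1, _, rfl⟩
  exact code_card_le n C h1

lemma deltaSet_zero_mem (D : Finset (List ℤ)) (n : ℕ) :
    0 ∈ {k : ℕ | ∃ C : Finset (List Bool),
      (∀ u ∈ C, u.length = n) ∧ AvoidsCode D C ∧ C.card = k} :=
  ⟨∅, by simp, fun u hu => by simp at hu, by simp⟩

lemma delta_mem (D : Finset (List ℤ)) (n : ℕ) :
    ∃ C : Finset (List Bool), (∀ u ∈ C, u.length = n) ∧ AvoidsCode D C ∧
      C.card = delta D n :=
  Nat.sSup_mem ⟨0, deltaSet_zero_mem D n⟩ (deltaSet_bdd D n)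

lemma delta_le_pow (D : Finset (List ℤ)) (n : ℕ) : delta D n ≤ 2 ^ n := by
  apply csSup_le ⟨0, deltaSet_zero_mem D n⟩
  rintro k ⟨C, h1, _, rfl⟩
  exact code_card_le n C h1

lemma le_delta (D : Finset (List ℤ)) (n k : ℕ)
    (h : ∃ C : Finset (List Bool), (∀ u ∈ C, u.length = n) ∧ AvoidsCode D C ∧ C.card = k) :
    k ≤ delta D n :=
  le_csSup (deltaSet_bdd D n) h


lemma prefix_of_prefix_append {p l₁ l₂ : List ℤ} (h : p <+: l₁ ++ l₂)
    (hl : p.length ≤ l₁.length) : p <+: l₁ := by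
  rw [List.prefix_iff_eq_take] at h ⊢
  rwa [List.take_append_of_le_length hl] at h

lemma main_avoid (n r₁ r₂ z : ℕ) (hr1n : r₁ ≤ n) (hr2n : r₂ ≤ n) (d d' : List ℤ)
    (hdl : d.length = n) (hd'l : d'.length = n)
    (hd1 : d.take r₁ = List.replicate r₁ 0)
    (hd'1 : d'.take r₁ = List.replicate r₁ 0)
    (hd2 : d.drop (n - r₂) = List.replicate r₂ 0)
    (hd'2 : d'.drop (n - r₂) = List.replicate r₂ 0)
    (p : List ℤ) (hp0 : p ≠ []) (hpz : p.length ≤ z)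
    (h₁ : ∀ a : ℕ, List.replicate a (0:ℤ) <+: p → a ≤ r₁)
    (h₂ : ∀ b : ℕ, List.replicate b (0:ℤ) <:+ p → b ≤ r₂)
    (hpd : ¬ p <:+: d) (hpd' : ¬ p <:+: d') :
    ∀ bs : List (List ℤ),
      (∀ c ∈ bs, ∃ e, (e = List.replicate n 0 ∨ e = d ∨ e = d') ∧
        c = e ++ List.replicate z 0) →
      ∀ g ≤ r₁, ¬ p <:+: (List.replicate g 0 ++ bs.flatten) := by
  classical
  have hpL : 0 < p.length := List.length_pos_iff.2 hp0
  -- all-zero p is impossible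
  have pnotrep : p ≠ List.replicate p.length 0 := by
    intro hrep
    have hle : p.length ≤ r₁ := h₁ _ (by rw [← hrep])
    apply hpd
    have hpre : p <+: List.replicate r₁ (0:ℤ) := by
      rw [hrep]
      exact ⟨List.replicate (r₁ - p.length) 0, by
        rw [← List.replicate_add]; congr 1; omega⟩
    exact (hpre.trans (hd1 ▸ List.take_prefix r₁ d)).isInfix
  have hnz : ∃ j, p.getD j 0 ≠ 0 := by
    by_contra hall
    push_neg at hall
    exact pnotrep (by
      have := eq_replicate_of_getD (l := p) (fun j _ => hall j)
      exact this)
  -- first nonzero position a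
  set a := Nat.find hnz with ha_def
  have ha : p.getD a 0 ≠ 0 := Nat.find_spec hnz
  have ha_min : ∀ j < a, p.getD j 0 = 0 := by
    intro j hj
    have h0 := Nat.find_min hnz (m := j) (by omega)
    simpa using h0
  have haL : a < p.length := by
    by_contra h
    push_neg at h
    exact ha (List.getD_eq_default _ _ h)
  have haR : a ≤ r₁ := h₁ a (by
    rw [← take_eq_replicate_of p a (le_of_lt haL) ha_min]
    exact List.take_prefix a p)
  -- last nonzero position b
  have hnzr : ∃ j, p.reverse.getD j 0 ≠ 0 := by
    refine ⟨p.length - 1 - a, ?_⟩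
    rw [getD_reverse (by omega)]
    have : p.length - 1 - (p.length - 1 - a) = a := by omega
    rw [this]; exact ha
  set b' := Nat.find hnzr with hb'_def
  have hb'L : b' < p.length := by
    by_contra h
    push_neg at h
    have h0 : p.reverse.getD b' 0 = 0 :=
      List.getD_eq_default (l := p.reverse) 0 (by simpa using h)
    exact Nat.find_spec hnzr h0
  set b := p.length - 1 - b' with hb_def
  have hb : p.getD b 0 ≠ 0 := by
    have := Nat.find_spec hnzr
    rwa [getD_reverse hb'L] at this
  have hb_max : ∀ j, b < j → j < p.length → p.getD j 0 = 0 := by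
    intro j hbj hjL
    have hj' : p.length - 1 - j < b' := by omega
    have := Nat.find_min hnzr hj'
    rw [getD_reverse (by omega)] at this
    have hjj : p.length - 1 - (p.length - 1 - j) = j := by omega
    rw [hjj] at this
    simpa using this
  have hbL : b < p.length := by omega
  have hab : a ≤ b := Nat.find_le hb
  have hbR : p.length - (b+1) ≤ r₂ := by
    apply h₂
    rw [← drop_eq_replicate_of p (b+1) (fun j h1 h2 => hb_max j (by omega) h2)]
    exact List.drop_suffix _ _
  -- induction over the blocks
  intro bs
  induction bs with
  | nil =>
    intro hbs g hg hinf
    simp only [List.flatten_nil, List.append_nil] at hinf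
    exact pnotrep (infix_replicate_all_zero hinf)
  | cons c rest ih =>
    intro hbs g hg hinf
    obtain ⟨e, he, hc⟩ := hbs c List.mem_cons_self
    have hel : e.length = n := by rcases he with rfl|rfl|rfl <;> simp [hdl, hd'l]
    have he1 : e.take r₁ = List.replicate r₁ 0 := by
      rcases he with rfl|rfl|rfl
      · rw [List.take_replicate]; congr 1; omega
      · exact hd1
      · exact hd'1
    have he2 : e.drop (n - r₂) = List.replicate r₂ 0 := by
      rcases he with rfl|rfl|rfl
      · rw [List.drop_replicate]; congr 1; omega
      · exact hd2
      · exact hd'2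
    set U : List ℤ := List.replicate g 0 ++ c with hU
    set J : List ℤ := rest.flatten with hJ
    have hUlen : U.length = g + (n + z) := by
      simp only [hU, hc, List.length_append, List.length_replicate, hel]
    have hT : List.replicate g 0 ++ (c :: rest).flatten = U ++ J := by
      simp [hU, hJ, List.flatten_cons, List.append_assoc]
    rw [hT] at hinf
    obtain ⟨x, y, hxy⟩ := hinf
    set s := x.length with hs_def
    have hocc : p <+: (U ++ J).drop s := by
      rw [← hxy, List.append_assoc, List.drop_left]
      exact ⟨y, rfl⟩
    have hpt : ∀ j < p.length, p.getD j 0 = (U ++ J).getD (s+j) 0 := by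
      intro j hj
      rw [← getD_drop]
      exact (prefix_getD hocc hj).symm
    -- U nonzero positions characterization
    have hUchar : ∀ q, U.getD q 0 ≠ 0 → g + r₁ ≤ q ∧ q < g + (n - r₂) := by
      intro q hq
      rw [hU, hc, getD_append] at hq
      simp only [List.length_replicate] at hq
      by_cases h1 : q < g
      · rw [if_pos h1, getD_replicate] at hq; exact absurd rfl hq
      rw [if_neg h1] at hq
      rw [getD_append, hel] at hq
      by_cases h2 : q - g < n
      · rw [if_pos h2] at hq
        by_cases h3 : q - g < r₁
        · rw [← getD_take_lt e h3, he1, getD_replicate] at hq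
          exact absurd rfl hq
        by_cases h4 : n - r₂ ≤ q - g
        · have hqg : q - g = (n - r₂) + (q - g - (n - r₂)) := by omega
          rw [hqg, ← getD_drop, he2, getD_replicate] at hq
          exact absurd rfl hq
        · omega
      · rw [if_neg h2, getD_replicate] at hq; exact absurd rfl hq
    by_cases hcase : s + a < U.length
    · -- first nonzero of p lands in U
      have hUa : U.getD (s+a) 0 ≠ 0 := by
        have := hpt a haL
        rw [getD_append, if_pos hcase] at this
        rw [← this]; exact ha
      obtain ⟨hA1, hA2⟩ := hUchar _ hUa
      by_cases hcb : s + b < U.length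
      · -- whole nonzero core in U : extract p as factor of e
        have hUb : U.getD (s+b) 0 ≠ 0 := by
          have := hpt b hbL
          rw [getD_append, if_pos hcb] at this
          rw [← this]; exact hb
        obtain ⟨hB1, hB2⟩ := hUchar _ hUb
        have hs_ge : g ≤ s := by omega
        have hsp : s + p.length ≤ g + n := by omega
        -- p <+: U.drop s
        have hocc2 : p <+: U.drop s ++ J := by
          rw [List.drop_append, Nat.sub_eq_zero_of_le (by omega),
            List.drop_zero] at hocc
          exact hocc
        have hpre1 : p <+: U.drop s := by
          apply prefix_of_prefix_append hocc2
          rw [List.length_drop]; omega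
        have hUdrop : U.drop s = e.drop (s - g) ++ List.replicate z 0 := by
          rw [hU, hc, List.drop_append, List.drop_append]
          simp only [List.length_replicate, hel]
          rw [List.drop_replicate, List.drop_replicate]
          have e1 : g - s = 0 := by omega
          have e2 : s - g - n = 0 := by omega
          rw [e1, e2]
          simp
        rw [hUdrop] at hpre1
        have hpre2 : p <+: e.drop (s - g) := by
          apply prefix_of_prefix_append hpre1
          rw [List.length_drop, hel]; omega
        have hinf_e : p <:+: e := List.infix_iff_prefix_suffix.2
          ⟨e.drop (s - g), hpre2, List.drop_suffix _ _⟩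
        rcases he with rfl|rfl|rfl
        · exact pnotrep (infix_replicate_all_zero hinf_e)
        · exact hpd hinf_e
        · exact hpd' hinf_e
      · -- core straddles: impossible by length
        rw [hUlen] at hcb
        omega
    · -- first nonzero beyond U: recurse
      by_cases hsU : U.length ≤ s
      · -- occurrence entirely in J
        have hocc2 : p <+: J.drop (s - U.length) := by
          rw [List.drop_append, List.drop_eq_nil_of_le hsU,
            List.nil_append] at hocc
          exact hocc
        have hinfJ : p <:+: List.replicate 0 0 ++ J :=
          List.infix_iff_prefix_suffix.2 ⟨J.drop (s - U.length), hocc2,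
            by simpa using List.drop_suffix (s - U.length) J⟩
        exact ih (fun c' hc' => hbs c' (List.mem_cons_of_mem _ hc')) 0 (Nat.zero_le _) hinfJ
      · push_neg at hsU
        set w := U.length - s with hw_def
        have hwa : w ≤ a := by omega
        have hUdrop0 : U.drop s = List.replicate w 0 := by
          have h0 : ∀ j, s ≤ j → j < U.length → U.getD j 0 = 0 := by
            intro j hsj hjU
            have hja : j - s < a := by omega
            have hjp : j - s < p.length := by omega
            have := hpt (j - s) hjp
            rw [getD_append, if_pos (by omega)] at this
            have e1 : s + (j - s) = j := by omega
            rw [e1] at this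
            rw [← this]
            exact ha_min _ hja
          exact drop_eq_replicate_of U s h0
        have hocc2 : p <+: List.replicate w 0 ++ J := by
          rw [List.drop_append, Nat.sub_eq_zero_of_le (le_of_lt hsU),
            List.drop_zero, hUdrop0] at hocc
          exact hocc
        exact ih (fun c' hc' => hbs c' (List.mem_cons_of_mem _ hc')) w
          (le_trans hwa haR) hocc2.isInfix


end ZeroCap

open ZeroCap in
/-- if `cap(D) = 0`, then every code avoiding `D` has size at most
`2^{r₁+r₂}`, independently of the word length. -/
theorem zero_capacity_bounded_codes (D : Finset (List ℤ)) (hDne : D.Nonempty)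
    (hD : ∀ p ∈ D, IsPattern p) (r₁ r₂ : ℕ)
    (hr₁ : (∃ p ∈ D, List.replicate r₁ (0:ℤ) <+: p) ∧
      ∀ k : ℕ, (∃ p ∈ D, List.replicate k (0:ℤ) <+: p) → k ≤ r₁)
    (hr₂ : (∃ p ∈ D, List.replicate r₂ (0:ℤ) <:+ p) ∧
      ∀ k : ℕ, (∃ p ∈ D, List.replicate k (0:ℤ) <:+ p) → k ≤ r₂)
    (hcap : cap D = 0) :
    ∀ n : ℕ, 1 ≤ n → delta D n ≤ 2 ^ (r₁ + r₂) := by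
  intro n hn
  by_contra hbig
  push_neg at hbig
  have hnr : r₁ + r₂ < n := by
    by_contra hle
    push_neg at hle
    have h1 := delta_le_pow D n
    have h2 : (2:ℕ)^n ≤ 2^(r₁+r₂) := Nat.pow_le_pow_right (by norm_num) hle
    omega
  obtain ⟨C, hClen, hCav, hCcard⟩ := delta_mem D n
  -- pigeonhole on (prefix of length r₁, suffix of length r₂)
  have hcard : (Finset.univ : Finset ((Fin r₁ → Bool) × (Fin r₂ → Bool))).card < C.card := by
    rw [hCcard]
    simpa [pow_add] using hbig
  obtain ⟨u, hu, v, hv, huv, hfeq⟩ :=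
    Finset.exists_ne_map_eq_of_card_lt_of_maps_to hcard
      (f := fun w => ((fun i : Fin r₁ => w.getD i false),
        (fun i : Fin r₂ => w.getD (n - r₂ + i) false)))
      (fun a _ => Finset.mem_univ _)
  have hulen : u.length = n := hClen u hu
  have hvlen : v.length = n := hClen v hv
  have hluv : u.length = v.length := by rw [hulen, hvlen]
  have hfst := congrArg Prod.fst hfeq
  have hsnd := congrArg Prod.snd hfeq
  have htake : u.take r₁ = v.take r₁ := by
    apply List.ext_getElem (by simp [hulen, hvlen])
    intro i hi1 hi2
    have hir : i < r₁ := by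
      simp only [List.length_take, hulen] at hi1; omega
    have h5 : u.getD i false = v.getD i false := congrFun hfst ⟨i, hir⟩
    have hiu : i < u.length := by omega
    have hiv : i < v.length := by omega
    rw [List.getElem_take, List.getElem_take]
    rwa [List.getD_eq_getElem _ _ hiu, List.getD_eq_getElem _ _ hiv] at h5
  have hdrop : u.drop (n - r₂) = v.drop (n - r₂) := by
    apply List.ext_getElem (by simp [hulen, hvlen])
    intro i hi1 hi2
    have hir : i < r₂ := by
      simp only [List.length_drop, hulen] at hi1; omega
    have h5 : u.getD (n - r₂ + i) false = v.getD (n - r₂ + i) false := congrFun hsnd ⟨i, hir⟩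
    have hiu : n - r₂ + i < u.length := by omega
    have hiv : n - r₂ + i < v.length := by omega
    rw [List.getElem_drop, List.getElem_drop]
    rwa [List.getD_eq_getElem _ _ hiu, List.getD_eq_getElem _ _ hiv] at h5
  set d := diffWord u v with hd_def
  set d' := diffWord v u with hd'_def
  have hdl : d.length = n := by simp [hd_def, diffWord, hulen, hvlen]
  have hd'l : d'.length = n := by simp [hd'_def, diffWord, hulen, hvlen]
  have hd1 : d.take r₁ = List.replicate r₁ 0 := by
    rw [hd_def]
    show (diffWord u v).take r₁ = _
    rw [diffWord, List.take_zipWith, htake]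
    rw [show List.zipWith (fun a b => boolToInt a - boolToInt b) (v.take r₁) (v.take r₁)
      = diffWord (v.take r₁) (v.take r₁) from rfl, diffWord_self]
    congr 1
    simp [hvlen]; omega
  have hd'1 : d'.take r₁ = List.replicate r₁ 0 := by
    rw [hd'_def]
    show (diffWord v u).take r₁ = _
    rw [diffWord, List.take_zipWith, ← htake]
    rw [show List.zipWith (fun a b => boolToInt a - boolToInt b) (u.take r₁) (u.take r₁)
      = diffWord (u.take r₁) (u.take r₁) from rfl, diffWord_self]
    congr 1
    simp [hulen]; omega
  have hd2 : d.drop (n - r₂) = List.replicate r₂ 0 := by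
    rw [hd_def]
    show (diffWord u v).drop (n - r₂) = _
    rw [diffWord, List.drop_zipWith, hdrop]
    rw [show List.zipWith (fun a b => boolToInt a - boolToInt b) (v.drop (n-r₂)) (v.drop (n-r₂))
      = diffWord (v.drop (n-r₂)) (v.drop (n-r₂)) from rfl, diffWord_self]
    congr 1
    simp [hvlen]; omega
  have hd'2 : d'.drop (n - r₂) = List.replicate r₂ 0 := by
    rw [hd'_def]
    show (diffWord v u).drop (n - r₂) = _
    rw [diffWord, List.drop_zipWith, ← hdrop]
    rw [show List.zipWith (fun a b => boolToInt a - boolToInt b) (u.drop (n-r₂)) (u.drop (n-r₂))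
      = diffWord (u.drop (n-r₂)) (u.drop (n-r₂)) from rfl, diffWord_self]
    congr 1
    simp [hulen]; omega
  set z := D.sup List.length with hz_def
  have hpz : ∀ p ∈ D, p.length ≤ z := fun p hp => Finset.le_sup hp
  -- the key capacity lower bound
  have hkey : ∀ k : ℕ, 2 ^ k ≤ delta D (k * (n + z)) := by
    intro k
    apply le_delta
    refine ⟨Finset.image (fun f : Fin k → Bool => Wl u v z (List.ofFn f)) Finset.univ,
      ?_, ?_, ?_⟩
    · intro w hw
      obtain ⟨f, _, rfl⟩ := Finset.mem_image.1 hw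
      rw [Wl_length u v hluv z, List.length_ofFn, hulen]
    · intro w₁ h₁ w₂ h₂ hne p hp
      obtain ⟨f₁, _, rfl⟩ := Finset.mem_image.1 h₁
      obtain ⟨f₂, _, rfl⟩ := Finset.mem_image.1 h₂
      rw [diffWord_Wl u v hluv z _ _ (by simp)]
      intro hinf
      have hbs : ∀ c ∈ List.zipWith (fun b c => diffWord (wb u v b) (wb u v c)
          ++ List.replicate z (0:ℤ)) (List.ofFn f₁) (List.ofFn f₂),
          ∃ e, (e = List.replicate n 0 ∨ e = d ∨ e = d') ∧
            c = e ++ List.replicate z 0 := by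
        intro c hc
        obtain ⟨b1, b2, rfl⟩ := mem_zipWith' _ _ _ _ hc
        cases b1 <;> cases b2
        · exact ⟨List.replicate n 0, Or.inl rfl, by simp [wb, diffWord_self, hvlen]⟩
        · exact ⟨d', Or.inr (Or.inr rfl), by simp [wb, hd'_def]⟩
        · exact ⟨d, Or.inr (Or.inl rfl), by simp [wb, hd_def]⟩
        · exact ⟨List.replicate n 0, Or.inl rfl, by simp [wb, diffWord_self, hulen]⟩
      exact main_avoid n r₁ r₂ z (by omega) (by omega) d d' hdl hd'l hd1 hd'1 hd2 hd'2
        p (hD p hp).1 (hpz p hp)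
        (fun a hpre => hr₁.2 a ⟨p, hp, hpre⟩) (fun b hsuf => hr₂.2 b ⟨p, hp, hsuf⟩)
        (hCav u hu v hv huv p hp) (hCav v hv u hu (Ne.symm huv) p hp)
        _ hbs 0 (Nat.zero_le _) (by simpa using hinf)
    · rw [Finset.card_image_of_injective _ (fun f₁ f₂ hf => List.ofFn_injective
        (Wl_inj u v huv hluv z _ _ (by simp) hf))]
      simp
  -- capacity is at least 1/(n+z) > 0 : contradiction
  have hbdd : Filter.IsBoundedUnder (· ≤ ·) Filter.atTop
      (fun N : ℕ => Real.logb 2 (delta D N) / N) := by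
    apply Filter.isBoundedUnder_of
    refine ⟨1, fun N => ?_⟩
    rcases Nat.eq_zero_or_pos N with rfl | hN
    · simp
    have hδ : (delta D N : ℝ) ≤ (2:ℝ)^N := by exact_mod_cast delta_le_pow D N
    have hlog : Real.logb 2 (delta D N) ≤ N := by
      rcases Nat.eq_zero_or_pos (delta D N) with h0 | h0
      · rw [h0]; simp
      · have hpos : (0:ℝ) < delta D N := by exact_mod_cast h0
        calc Real.logb 2 (delta D N) ≤ Real.logb 2 ((2:ℝ)^N) :=
              (Real.logb_le_logb (by norm_num) hpos (by positivity)).2 hδ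
          _ = N := by rw [Real.logb_pow, Real.logb_self_eq_one (by norm_num)]; ring
    rw [div_le_one (by exact_mod_cast hN : (0:ℝ) < N)]
    exact hlog
  have hfreq : ∃ᶠ N in Filter.atTop,
      (1:ℝ)/((n+z : ℕ):ℝ) ≤ Real.logb 2 (delta D N) / N := by
    rw [Filter.frequently_atTop]
    intro a
    refine ⟨(a+1) * (n+z), ?_, ?_⟩
    · have h6 : a + 1 ≤ (a+1)*(n+z) := Nat.le_mul_of_pos_right _ (by omega)
      omega
    · have h2k := hkey (a+1)
      have hδ1 : 1 ≤ delta D ((a+1)*(n+z)) := le_trans Nat.one_le_two_pow h2k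
      have hδpos : (0:ℝ) < delta D ((a+1)*(n+z)) := by exact_mod_cast hδ1
      have hlogb : ((a:ℝ)+1) ≤ Real.logb 2 (delta D ((a+1)*(n+z))) := by
        have hle : ((2:ℝ))^(a+1) ≤ (delta D ((a+1)*(n+z)) : ℝ) := by exact_mod_cast h2k
        have h7 := (Real.logb_le_logb (b := 2) (by norm_num) (by positivity) hδpos).2 hle
        calc ((a:ℝ)+1) = Real.logb 2 ((2:ℝ)^(a+1)) := by
              rw [Real.logb_pow, Real.logb_self_eq_one (by norm_num)]; push_cast; ring
          _ ≤ _ := h7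
      have hNpos : (0:ℝ) < (((a+1) * (n+z) : ℕ):ℝ) := by
        have : 0 < (a+1)*(n+z) := by positivity
        exact_mod_cast this
      rw [le_div_iff₀ hNpos]
      have heq : (1:ℝ)/((n+z : ℕ):ℝ) * (((a+1) * (n+z) : ℕ):ℝ) = ((a:ℝ)+1) := by
        have hnz0 : ((n+z : ℕ):ℝ) ≠ 0 := by
          have : 0 < n + z := by omega
          exact_mod_cast Nat.pos_iff_ne_zero.1 this
        push_cast
        field_simp
      rw [heq]
      exact hlogb
  have hle := Filter.le_limsup_of_frequently_le hfreq hbdd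
  have hle2 : (1:ℝ)/((n+z : ℕ):ℝ) ≤ cap D := hle
  rw [hcap] at hle2
  have hpos : (0:ℝ) < (1:ℝ)/((n+z : ℕ):ℝ) := by
    have : 0 < n + z := by omega
    have : (0:ℝ) < ((n+z : ℕ):ℝ) := by exact_mod_cast this
    positivity
  linarith
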